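/- Let Q be the (1+G₁+...+G_K)×(1+G₁+...+G_K) symmetric matrix with Q₀₀ = δ where δ = Σ_g n_g^{(k)} (same for all k), diagonal blocks Q_{kk} = T_k I + diag(n_g^{(k)}), off-diagonal blocks Q_{kℓ} = N_{kℓ} with row sums n_g^{(k)}, and Q_{0k} the vector (n_g^{(k)})_g. Let Q̃ be its block-diagonal part and Q̄ = Q̃^{-1/2} Q Q̃^{-1/2}. With v₀ = δ^{1/2} e₀ and v_k having entries (T_k + n_g^{(k)})^{1/2} on block k and 0 elsewhere, one has v₀ᵀ Q̄ v_k = Σ_g n_g^{(k)}, ‖v₀‖ = δ^{1/2}, and ‖v_k‖ = (G_k T_k + Σ_g n_g^{(k)})^{1/2}; consequently λ_min(Q̄) ≤ 1 − max_k (δ/(G_k T_k + δ))^{1/2}. -/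

import Mathlib

open Matrix

set_option maxHeartbeats 1600000

/-- Let `Q` be the `(1 + G₁ + ⋯ + G_K)`-dimensional symmetric positive
semidefinite precision matrix of a random-intercept mixed model under the fully factorized
variational approximation: `Q₀₀ = δ` where `δ = Σ_g n_g^{(k)}` (the same for all `k`),
diagonal blocks `T_k I + diag(n_g^{(k)})`, off-diagonal blocks nonnegative with row sums
`n_g^{(k)}`, and `Q_{0k} = (n_g^{(k)})_g`. Let `Q̄ = Q̃^{-1/2} Q Q̃^{-1/2}` where `Q̃` is the
(here diagonal) block-diagonal part of `Q`. With `v₀ = δ^{1/2} e₀` and `v_k` having entries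
`(T_k + n_g^{(k)})^{1/2}` on block `k` and `0` elsewhere, one has
`v₀ᵀ Q̄ v_k = Σ_g n_g^{(k)}`, `‖v₀‖ = δ^{1/2}`, `‖v_k‖ = (G_k T_k + Σ_g n_g^{(k)})^{1/2}`;
consequently `λ_min(Q̄) ≤ 1 - max_k (δ/(G_k T_k + δ))^{1/2}`. -/
theorem stmt15 {K : ℕ} (hK : 0 < K) {G : Fin K → ℕ} (hG : ∀ k, 0 < G k)
    (T : Fin K → ℝ) (hT : ∀ k, 0 < T k)
    (ng : (k : Fin K) → Fin (G k) → ℝ) (hng : ∀ k g, 0 ≤ ng k g)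
    (δ : ℝ) (hδ : 0 < δ) (hsumg : ∀ k, ∑ g, ng k g = δ)
    (Q : Matrix (Unit ⊕ ((k : Fin K) × Fin (G k))) (Unit ⊕ ((k : Fin K) × Fin (G k))) ℝ)
    (hsym : Q.IsSymm) (hpsd : Q.PosSemidef)
    (hQ00 : Q (Sum.inl ()) (Sum.inl ()) = δ)
    (hQ0 : ∀ (k : Fin K) (g : Fin (G k)), Q (Sum.inl ()) (Sum.inr ⟨k, g⟩) = ng k g)
    (hQdiag : ∀ (k : Fin K) (g g' : Fin (G k)),
      Q (Sum.inr ⟨k, g⟩) (Sum.inr ⟨k, g'⟩) = if g = g' then T k + ng k g else 0)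
    (hQoffnn : ∀ (k l : Fin K), k ≠ l → ∀ (g : Fin (G k)) (h : Fin (G l)),
      0 ≤ Q (Sum.inr ⟨k, g⟩) (Sum.inr ⟨l, h⟩))
    (hQoffsum : ∀ (k l : Fin K), k ≠ l → ∀ g : Fin (G k),
      ∑ h : Fin (G l), Q (Sum.inr ⟨k, g⟩) (Sum.inr ⟨l, h⟩) = ng k g)
    (dv : Unit ⊕ ((k : Fin K) × Fin (G k)) → ℝ)
    (hdv0 : dv (Sum.inl ()) = (Real.sqrt δ)⁻¹)
    (hdv : ∀ (k : Fin K) (g : Fin (G k)), dv (Sum.inr ⟨k, g⟩) = (Real.sqrt (T k + ng k g))⁻¹)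
    (Qbar : Matrix (Unit ⊕ ((k : Fin K) × Fin (G k))) (Unit ⊕ ((k : Fin K) × Fin (G k))) ℝ)
    (hQbar : Qbar = Matrix.diagonal dv * Q * Matrix.diagonal dv)
    (v₀ : Unit ⊕ ((k : Fin K) × Fin (G k)) → ℝ)
    (hv₀ : v₀ = fun i => if i = Sum.inl () then Real.sqrt δ else 0)
    (vk : (k : Fin K) → Unit ⊕ ((k : Fin K) × Fin (G k)) → ℝ)
    (hvk : ∀ k : Fin K, vk k = fun i =>
      match i with
      | Sum.inl _ => 0
      | Sum.inr ⟨l, g⟩ => if l = k then Real.sqrt (T l + ng l g) else 0) :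
    (∀ k : Fin K, v₀ ⬝ᵥ Qbar *ᵥ vk k = ∑ g, ng k g) ∧
      Real.sqrt (v₀ ⬝ᵥ v₀) = Real.sqrt δ ∧
      (∀ k : Fin K, Real.sqrt (vk k ⬝ᵥ vk k) = Real.sqrt ((G k : ℝ) * T k + ∑ g, ng k g)) ∧
      (∀ k : Fin K, sInf (spectrum ℝ Qbar) ≤ 1 - Real.sqrt (δ / ((G k : ℝ) * T k + δ))) := by
  have hQb : ∀ i j, Qbar i j = dv i * Q i j * dv j := by
    intro i j
    rw [hQbar, Matrix.mul_diagonal, Matrix.diagonal_mul]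
  have hpos : ∀ (k : Fin K) (g : Fin (G k)), (0:ℝ) < T k + ng k g := fun k g =>
    add_pos_of_pos_of_nonneg (hT k) (hng k g)
  have hsqne : ∀ (k : Fin K) (g : Fin (G k)), Real.sqrt (T k + ng k g) ≠ 0 := fun k g =>
    Real.sqrt_ne_zero'.2 (hpos k g)
  have hsδ : Real.sqrt δ ≠ 0 := Real.sqrt_ne_zero'.2 hδ
  -- cross quadratic form
  have hcross : ∀ k : Fin K, v₀ ⬝ᵥ Qbar *ᵥ vk k = δ := by
    intro k
    rw [hv₀, hvk k]
    simp only [dotProduct, Matrix.mulVec, Fintype.sum_sum_type, ← Finset.univ_sigma_univ,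
      Finset.sum_sigma]
    simp only [hQb, hdv0, hdv, hQ0, reduceCtorEq, if_false, if_true, mul_zero, zero_mul,
      Finset.sum_const_zero, add_zero, zero_add]
    rw [Finset.sum_const, Finset.card_univ, Fintype.card_unit, one_smul]
    simp only [mul_ite, mul_zero]
    rw [Finset.sum_eq_single k (fun l _ hl => by simp [hl]) (by simp)]
    simp only [if_pos rfl, if_true, Finset.mul_sum]
    calc ∑ g : Fin (G k), Real.sqrt δ *
          ((Real.sqrt δ)⁻¹ * ng k g * (Real.sqrt (T k + ng k g))⁻¹ * Real.sqrt (T k + ng k g))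
        = ∑ g : Fin (G k), ng k g := by
          refine Finset.sum_congr rfl fun g _ => ?_
          field_simp
          exact mul_div_cancel_right₀ _ (hsqne k g)
      _ = δ := hsumg k
  -- diagonal quadratic forms
  have h00 : v₀ ⬝ᵥ Qbar *ᵥ v₀ = δ := by
    rw [hv₀]
    simp only [dotProduct, Matrix.mulVec, Fintype.sum_sum_type, ← Finset.univ_sigma_univ,
      Finset.sum_sigma]
    simp only [hQb, hdv0, hQ00, reduceCtorEq, if_false, if_true, mul_zero, zero_mul,
      Finset.sum_const_zero, add_zero, zero_add]
    rw [Finset.sum_const, Finset.card_univ, Fintype.card_unit, one_smul,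
      Finset.sum_const, Finset.card_univ, Fintype.card_unit, one_smul]
    field_simp
  have hkk : ∀ k : Fin K, vk k ⬝ᵥ Qbar *ᵥ vk k = (G k : ℝ) * T k + δ := by
    intro k
    have hblocksum : ∑ g : Fin (G k), (T k + ng k g) = (G k : ℝ) * T k + δ := by
      rw [Finset.sum_add_distrib, Finset.sum_const, Finset.card_univ, Fintype.card_fin,
        nsmul_eq_mul, hsumg k]
    rw [hvk k]
    simp only [dotProduct, Matrix.mulVec, Fintype.sum_sum_type, ← Finset.univ_sigma_univ,
      Finset.sum_sigma]
    simp only [hQb, hdv, mul_zero, zero_mul, Finset.sum_const_zero, add_zero, zero_add,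
      mul_ite, ite_mul]
    rw [Finset.sum_eq_single k (fun l _ hl => by simp [hl]) (by simp)]
    simp only [if_pos rfl, if_true]
    refine Eq.trans (Finset.sum_congr rfl fun g _ => ?_) hblocksum
    rw [Finset.sum_eq_single k (fun l _ hl => by simp [hl]) (by simp)]
    simp only [if_pos rfl, if_true]
    rw [Finset.sum_eq_single g
      (fun g' _ hg' => by rw [hQdiag k g g', if_neg (Ne.symm hg')]; ring) (by simp)]
    rw [hQdiag k g g, if_pos rfl]
    field_simp
    exact mul_div_cancel_right₀ _ (hsqne k g)
  -- norms
  have hn0 : v₀ ⬝ᵥ v₀ = δ := by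
    rw [hv₀]
    simp only [dotProduct, Fintype.sum_sum_type, ← Finset.univ_sigma_univ,
      Finset.sum_sigma]
    simp [Real.mul_self_sqrt hδ.le]
  have hnk : ∀ k : Fin K, vk k ⬝ᵥ vk k = (G k : ℝ) * T k + δ := by
    intro k
    rw [hvk k]
    simp only [dotProduct, Fintype.sum_sum_type, ← Finset.univ_sigma_univ,
      Finset.sum_sigma]
    simp only [mul_zero, zero_mul, Finset.sum_const_zero, add_zero, zero_add, mul_ite, ite_mul]
    rw [Finset.sum_eq_single k (fun l _ hl => by simp [hl]) (by simp)]
    simp only [if_pos rfl]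
    calc ∑ g : Fin (G k), Real.sqrt (T k + ng k g) * Real.sqrt (T k + ng k g)
        = ∑ g : Fin (G k), (T k + ng k g) :=
          Finset.sum_congr rfl fun g _ => Real.mul_self_sqrt (hpos k g).le
      _ = (G k : ℝ) * T k + δ := by
          rw [Finset.sum_add_distrib, Finset.sum_const, Finset.card_univ, Fintype.card_fin,
            nsmul_eq_mul, hsumg k]
  -- orthogonality
  have horth : ∀ k : Fin K, v₀ ⬝ᵥ vk k = 0 := by
    intro k
    rw [hv₀, hvk k]
    simp [dotProduct, Fintype.sum_sum_type]
  -- symmetry of Qbar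
  have hQbarherm : Qbar.IsHermitian := by
    rw [Matrix.IsHermitian, Matrix.conjTranspose_eq_transpose_of_trivial, hQbar,
      Matrix.transpose_mul, Matrix.transpose_mul, Matrix.diagonal_transpose, hsym.eq]
    rw [Matrix.mul_assoc]
  have hQbarT : Qbarᵀ = Qbar := by
    rw [← Matrix.conjTranspose_eq_transpose_of_trivial, hQbarherm.eq]
  have hcross' : ∀ k : Fin K, vk k ⬝ᵥ Qbar *ᵥ v₀ = δ := by
    intro k
    rw [Matrix.dotProduct_mulVec, ← Matrix.mulVec_transpose, hQbarT, dotProduct_comm]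
    exact hcross k
  refine ⟨fun k => by rw [hcross k, hsumg k], by rw [hn0], fun k => by rw [hnk k, hsumg k], ?_⟩
  -- spectral bound
  intro k
  obtain ⟨m, hm⟩ : ∃ m : ℝ, m = sInf (spectrum ℝ Qbar) := ⟨_, rfl⟩
  rw [← hm]
  have hbdd : BddBelow (spectrum ℝ Qbar) := (Matrix.finite_spectrum Qbar).bddBelow
  have hBherm : (Qbar - algebraMap ℝ _ m).IsHermitian := by
    refine hQbarherm.sub ?_
    rw [Matrix.algebraMap_eq_diagonal]
    exact Matrix.isHermitian_diagonal _
  have hBpsd : (Qbar - algebraMap ℝ _ m).PosSemidef := by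
    refine hBherm.posSemidef_iff_eigenvalues_nonneg.mpr fun i => ?_
    have hmem := hBherm.eigenvalues_mem_spectrum_real i
    rw [← spectrum.sub_singleton_eq] at hmem
    obtain ⟨a, ha, b, hb, hab⟩ := hmem
    rw [Set.mem_singleton_iff] at hb
    rw [hb] at hab
    have hab' : a - m = hBherm.eigenvalues i := hab
    rw [← hab']
    have h1 := csInf_le hbdd ha
    rw [← hm] at h1
    show (0:ℝ) ≤ a - m
    linarith
  -- test vector
  obtain ⟨S, hS⟩ : ∃ S : ℝ, S = (G k : ℝ) * T k + δ := ⟨_, rfl⟩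
  rw [← hS]
  have hSpos : 0 < S := by
    have : (0:ℝ) ≤ (G k : ℝ) * T k := mul_nonneg (Nat.cast_nonneg _) (hT k).le
    linarith
  obtain ⟨u, hu⟩ : ∃ u : Unit ⊕ ((k : Fin K) × Fin (G k)) → ℝ,
      u = Real.sqrt S • v₀ - Real.sqrt δ • vk k := ⟨_, rfl⟩
  have hpsdu := hBpsd.dotProduct_mulVec_nonneg u
  rw [show star u = u from funext fun i => star_trivial _] at hpsdu
  have hquad : u ⬝ᵥ (Qbar - algebraMap ℝ _ m) *ᵥ u
      = (2 * S * δ - 2 * δ * (Real.sqrt S * Real.sqrt δ)) - m * (2 * S * δ) := by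
    rw [Matrix.sub_mulVec, dotProduct_sub, Algebra.algebraMap_eq_smul_one,
      Matrix.smul_mulVec, Matrix.one_mulVec, dotProduct_smul]
    have hSS : Real.sqrt S * Real.sqrt S = S := Real.mul_self_sqrt hSpos.le
    have hδδ : Real.sqrt δ * Real.sqrt δ = δ := Real.mul_self_sqrt hδ.le
    have e1 : u ⬝ᵥ Qbar *ᵥ u = 2 * S * δ - 2 * δ * (Real.sqrt S * Real.sqrt δ) := by
      rw [hu]
      simp only [sub_dotProduct, dotProduct_sub, smul_dotProduct,
        dotProduct_smul, Matrix.mulVec_sub, Matrix.mulVec_smul, smul_eq_mul]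
      rw [h00, hkk k, hcross k, hcross' k]
      nlinarith [hSS, hδδ]
    have e2 : u ⬝ᵥ u = 2 * S * δ := by
      rw [hu]
      simp only [sub_dotProduct, dotProduct_sub, smul_dotProduct,
        dotProduct_smul, smul_eq_mul]
      have horth' : vk k ⬝ᵥ v₀ = 0 := by rw [dotProduct_comm]; exact horth k
      rw [hn0, hnk k, horth k, horth']
      nlinarith [hSS, hδδ]
    rw [e1, e2, smul_eq_mul]
  rw [hquad] at hpsdu
  -- conclude
  have hqS : Real.sqrt (δ / S) * S = Real.sqrt δ * Real.sqrt S := by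
    rw [Real.sqrt_div hδ.le]
    have hSS : Real.sqrt S * Real.sqrt S = S := Real.mul_self_sqrt hSpos.le
    have hsS : Real.sqrt S ≠ 0 := Real.sqrt_ne_zero'.2 hSpos
    field_simp
    linear_combination (-1 : ℝ) * hSS
  have h2Sδ : 0 < 2 * S * δ := by positivity
  have hqS2 : Real.sqrt (δ / S) * (2 * S * δ) = 2 * δ * (Real.sqrt S * Real.sqrt δ) := by
    linear_combination (2 * δ) * hqS
  have key : m * (2 * S * δ) ≤ (1 - Real.sqrt (δ / S)) * (2 * S * δ) := by
    nlinarith [hpsdu, hqS2]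
  exact (mul_le_mul_iff_of_pos_right h2Sδ).mp key
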